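/- Addition as the limit of the XOR/carry iteration: let a b : ℤ and define u, v : ℕ → ℤ by u 0 = a, v 0 = b, u (k+1) = u k ^^^ v k, and v (k+1) = 2 * (u k &&& v k). Then in the 2-adic integers ℤ_[2], the sequence ((u k : ℤ_[2]))_k converges to ((a + b : ℤ) : ℤ_[2]) and the carry sequence ((v k : ℤ_[2]))_k converges to 0; that is, (a+b, 0) is the limiting fixed point of the map A(u,v) = (u XOR v, shift(u AND v)). -/

import Mathlib

instance : XorOp ℤ := ⟨Int.xor⟩
instance : AndOp ℤ := ⟨Int.land⟩


private lemma natA (x y : ℕ) : x + y = (x ^^^ y) + 2 * (x &&& y) := by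
  induction x using Nat.binaryRec generalizing y with
  | zero => simp
  | bit a m ih =>
    obtain ⟨b, n, rfl⟩ : ∃ b n, y = Nat.bit b n := ⟨y.bodd, y.div2, (Nat.bit_bodd_div2 y).symm⟩
    rw [Nat.xor_bit, Nat.land_bit]
    simp only [Nat.bit_val]
    have := ih n
    cases a <;> cases b <;> simp <;> omega

private lemma natB (x y : ℕ) : Nat.ldiff x y + (x &&& y) = x := by
  induction x using Nat.binaryRec generalizing y with
  | zero => simp [Nat.ldiff]
  | bit a m ih =>
    obtain ⟨b, n, rfl⟩ : ∃ b n, y = Nat.bit b n := ⟨y.bodd, y.div2, (Nat.bit_bodd_div2 y).symm⟩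
    rw [Nat.ldiff_bit, Nat.land_bit]
    simp only [Nat.bit_val]
    have := ih n
    cases a <;> cases b <;> simp <;> omega

private lemma natC (x y : ℕ) : (x ||| y) + (x &&& y) = x + y := by
  induction x using Nat.binaryRec generalizing y with
  | zero => simp
  | bit a m ih =>
    obtain ⟨b, n, rfl⟩ : ∃ b n, y = Nat.bit b n := ⟨y.bodd, y.div2, (Nat.bit_bodd_div2 y).symm⟩
    rw [Nat.lor_bit, Nat.land_bit]
    simp only [Nat.bit_val]
    have := ih n
    cases a <;> cases b <;> simp <;> omega

private lemma intA (x y : ℤ) : x + y = (x ^^^ y) + 2 * (x &&& y) := by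
  show x + y = Int.xor x y + 2 * Int.land x y
  cases x with
  | ofNat m =>
    cases y with
    | ofNat n =>
      show (m : ℤ) + n = ((m ^^^ n : ℕ) : ℤ) + 2 * ((m &&& n : ℕ) : ℤ)
      have := natA m n; omega
    | negSucc n =>
      show (m : ℤ) + Int.negSucc n = Int.negSucc (m ^^^ n) + 2 * ((Nat.ldiff m n : ℕ) : ℤ)
      have h1 := natA m n; have h2 := natB m n
      simp only [Int.negSucc_eq]
      push_cast; omega
  | negSucc m =>
    cases y with
    | ofNat n =>
      show Int.negSucc m + n = Int.negSucc (m ^^^ n) + 2 * ((Nat.ldiff n m : ℕ) : ℤ)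
      have h1 := natA m n; have h2 := natB n m
      have h3 : n &&& m = m &&& n := Nat.land_comm n m
      simp only [Int.negSucc_eq]
      push_cast; omega
    | negSucc n =>
      show Int.negSucc m + Int.negSucc n = ((m ^^^ n : ℕ) : ℤ) + 2 * Int.negSucc (m ||| n)
      have h1 := natA m n; have h2 := natC m n
      simp only [Int.negSucc_eq]
      push_cast; omega

private lemma intDvd (k : ℕ) : ∀ x y : ℤ, (2:ℤ)^k ∣ y → (2:ℤ)^k ∣ (x &&& y) := by
  induction k with
  | zero => intro x y _; simp
  | succ k ih =>
    intro x y hy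
    obtain ⟨z, rfl⟩ := hy
    show (2:ℤ)^(k+1) ∣ Int.land x (2 ^ (k + 1) * z)
    have hx : x = Int.bit x.bodd x.div2 := (Int.bit_decomp x).symm
    have hz : 2 ^ (k + 1) * z = Int.bit false (2^k * z) := by
      rw [Int.bit_val]; simp; ring
    rw [hx, hz, Int.land_bit]
    obtain ⟨w, hw⟩ : (2:ℤ)^k ∣ Int.land x.div2 (2^k * z) := ih _ _ ⟨z, rfl⟩
    refine ⟨w, ?_⟩
    rw [Int.bit_val, hw]
    simp
    ring

/-- Addition as the limit of the XOR/carry iteration: the sequence `u` converges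
2-adically to `a + b` and the carry sequence `v` converges to `0`. -/
theorem addition_xor_carry_limit (a b : ℤ) (u v : ℕ → ℤ)
    (hu0 : u 0 = a) (hv0 : v 0 = b)
    (hu : ∀ k, u (k + 1) = u k ^^^ v k)
    (hv : ∀ k, v (k + 1) = 2 * (u k &&& v k)) :
    Filter.Tendsto (fun k => ((u k : ℤ_[2]))) Filter.atTop (nhds ((a + b : ℤ) : ℤ_[2])) ∧
    Filter.Tendsto (fun k => ((v k : ℤ_[2]))) Filter.atTop (nhds 0) := by
  have hsum : ∀ k, u k + v k = a + b := by
    intro k; induction k with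
    | zero => rw [hu0, hv0]
    | succ k ih => rw [hu, hv, ← intA, ih]
  have hdvd : ∀ k, (2:ℤ)^k ∣ v k := by
    intro k; induction k with
    | zero => simp
    | succ k ih =>
      rw [hv]
      have := mul_dvd_mul_left (2:ℤ) (intDvd k (u k) (v k) ih)
      rwa [show (2:ℤ)^(k+1) = 2 * 2^k by ring]
  have hvten : Filter.Tendsto (fun k => ((v k : ℤ_[2]))) Filter.atTop (nhds 0) := by
    rw [tendsto_zero_iff_norm_tendsto_zero]
    refine squeeze_zero (fun k => norm_nonneg _) (g := fun k => (1/2 : ℝ)^k) ?_ ?_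
    · intro k
      obtain ⟨w, hw⟩ := hdvd k
      have : ((v k : ℤ_[2])) = (2:ℤ_[2])^k * (w : ℤ_[2]) := by rw [hw]; push_cast; ring
      rw [this]
      simp only [norm_mul, norm_pow]
      have h2 : ‖(2 : ℤ_[2])‖ = (1/2 : ℝ) := by
        have := PadicInt.norm_p (p := 2)
        norm_num at this ⊢
        exact this
      rw [h2] <;> try skip
      have : ‖(w : ℤ_[2])‖ ≤ 1 := PadicInt.norm_le_one _
      nlinarith [pow_nonneg (by norm_num : (0:ℝ) ≤ 1/2) k, norm_nonneg ((w : ℤ_[2]))]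
    · exact tendsto_pow_atTop_nhds_zero_of_lt_one (by norm_num) (by norm_num)
  refine ⟨?_, hvten⟩
  have heq : (fun k => ((u k : ℤ_[2]))) =
      fun k => (((a + b : ℤ) : ℤ_[2])) - ((v k : ℤ_[2])) := by
    funext k
    have : u k = a + b - v k := by have := hsum k; omega
    rw [this]; push_cast; ring
  rw [heq]
  simpa using (hvten.const_sub (((a + b : ℤ) : ℤ_[2])))
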